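/- Let n ≥ 2 and k ≥ 1 and consider the k-nearest neighbor platoon P(n,k). There exists a set S ⊆ {1,…,n} of reference vehicles with |S| = ⌈n/(2k+1)⌉ such that every follower (every vertex in F = {1,…,n} \ S) is adjacent in P(n,k) to at least one vertex of S; consequently, for this arrangement the smallest eigenvalue of the grounded Laplacian satisfies λ_1(L_g) ≥ 1 (equivalently, the H∞ norm 1/λ_1(L_g) of the velocity tracking error dynamics is at most 1). -/

import Mathlib

open scoped Matrix

/-- The `k`-nearest neighbor platoon `P(n,k)`: the graph on `{1,…,n}` (modeled as `Fin n`)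
in which distinct vertices `i, j` are adjacent iff `|i − j| ≤ k`. -/
def platoon (n k : ℕ) : SimpleGraph (Fin n) where
  Adj i j := i ≠ j ∧ ((i : ℤ) - (j : ℤ)).natAbs ≤ k
  symm := ⟨by
    intro i j h
    exact ⟨h.1.symm, by omega⟩⟩
  loopless := ⟨fun i h => h.1 rfl⟩

instance (n k : ℕ) : DecidableRel (platoon n k).Adj :=
  fun i j => inferInstanceAs (Decidable (i ≠ j ∧ ((i : ℤ) - (j : ℤ)).natAbs ≤ k))

/-- The grounded Laplacian: the principal submatrix of the Laplacian of `G`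
obtained by deleting the rows and columns indexed by the grounded set `S`. -/
noncomputable def groundedLaplacian {V : Type*} [Fintype V] [DecidableEq V]
    (G : SimpleGraph V) [DecidableRel G.Adj] (S : Finset V) :
    Matrix {v : V // v ∉ S} {v : V // v ∉ S} ℝ :=
  (G.lapMatrix ℝ).submatrix (fun i => (i : V)) (fun j => (j : V))

private lemma minlt_aux {a b N : ℕ} (h1 : a + 2 ≤ N) (h2 : a < b) :
    min a (N-1) < min b (N-1) := by omega

private lemma cov_aux {a i N kk : ℕ} (hD : a ≤ i) (hi : i < a + (2*kk+1)) (hiN : i < N) :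
    ((i:ℤ) - ((min (kk + a) (N-1) : ℕ) : ℤ)).natAbs ≤ kk := by omega

lemma grounded_spec {V : Type*} [Fintype V] [DecidableEq V]
    (G : SimpleGraph V) [DecidableRel G.Adj] (S : Finset V)
    (hcov : ∀ i : V, i ∉ S → ∃ j ∈ S, G.Adj i j) :
    ∀ μ ∈ spectrum ℝ (groundedLaplacian G S), 1 ≤ μ := by
  classical
  intro μ hμ
  set M := groundedLaplacian G S with hM
  rw [spectrum.mem_iff] at hμ
  have hdet : (algebraMap ℝ (Matrix {v : V // v ∉ S} {v : V // v ∉ S} ℝ) μ - M).det = 0 := by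
    by_contra h
    exact hμ ((Matrix.isUnit_iff_isUnit_det _).mpr (isUnit_iff_ne_zero.mpr h))
  obtain ⟨v, hv0, hv⟩ := Matrix.exists_mulVec_eq_zero_iff.mpr hdet
  have heig : M *ᵥ v = μ • v := by
    have := hv
    rw [Matrix.sub_mulVec, sub_eq_zero] at this
    rw [← this, Algebra.algebraMap_eq_smul_one, Matrix.smul_mulVec, Matrix.one_mulVec]
  -- extension of v by zero
  set y : V → ℝ := fun w => if h : w ∉ S then v ⟨w, h⟩ else 0 with hy
  have hyS : ∀ w ∈ S, y w = 0 := by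
    intro w hw; simp [hy, hw]
  have hyF : ∀ i : {v : V // v ∉ S}, y i = v i := by
    intro i; simp [hy, i.2]
  have hsum : ∀ (f : V → ℝ), (∀ w ∈ S, f w = 0) →
      ∑ w : V, f w = ∑ i : {v : V // v ∉ S}, f i := by
    intro f hf
    rw [← Finset.sum_compl_add_sum S f, Finset.sum_eq_zero hf, add_zero]
    exact Finset.sum_subtype Sᶜ (fun x => Finset.mem_compl) f
  -- quadratic forms agree
  have h1 : y ⬝ᵥ (G.lapMatrix ℝ *ᵥ y) = v ⬝ᵥ (M *ᵥ v) := by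
    rw [dotProduct, dotProduct,
      hsum (fun w => y w * (G.lapMatrix ℝ *ᵥ y) w) (fun w hw => by simp [hyS w hw])]
    refine Finset.sum_congr rfl fun i _ => ?_
    rw [hyF i]
    congr 1
    show (G.lapMatrix ℝ *ᵥ y) i = (M *ᵥ v) i
    rw [Matrix.mulVec, Matrix.mulVec, dotProduct, dotProduct,
      hsum (fun u => G.lapMatrix ℝ i u * y u) (fun u hu => by simp [hyS u hu])]
    refine Finset.sum_congr rfl fun j _ => ?_
    rw [hyF j]
    rfl
  -- choose a grounded neighbor for each follower
  have hnb : ∀ i : {v : V // v ∉ S}, ∃ j, j ∈ S ∧ G.Adj i j := by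
    intro i
    obtain ⟨j, hj, hadj⟩ := hcov i i.2
    exact ⟨j, hj, hadj⟩
  choose nbr hnbS hnbAdj using hnb
  -- lower bound the quadratic form
  set t : V → V → ℝ := fun w u => if G.Adj w u then (y w - y u)^2 else 0 with ht
  have htnn : ∀ w u, 0 ≤ t w u := by
    intro w u; simp only [ht]; positivity
  have hquad : y ⬝ᵥ (G.lapMatrix ℝ *ᵥ y) = (∑ w : V, ∑ u : V, t w u) / 2 := by
    rw [← Matrix.toLinearMap₂'_apply', SimpleGraph.lapMatrix_toLinearMap₂']
  have hP : (∑ w : V, ∑ u : V, t w u) ≥ 2 * ∑ i : {v : V // v ∉ S}, (v i)^2 := by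
    rw [← Finset.sum_product']
    set P₁ := Finset.univ.image (fun i : {v : V // v ∉ S} => ((i : V), nbr i)) with hP₁
    set P₂ := Finset.univ.image (fun i : {v : V // v ∉ S} => (nbr i, (i : V))) with hP₂
    have hdisj : Disjoint P₁ P₂ := by
      rw [Finset.disjoint_left]
      intro p hp1 hp2
      simp only [hP₁, Finset.mem_image, Finset.mem_univ, true_and] at hp1
      simp only [hP₂, Finset.mem_image, Finset.mem_univ, true_and] at hp2
      obtain ⟨i, hi⟩ := hp1
      obtain ⟨j, hj⟩ := hp2
      have : p.1 ∉ S := by rw [← hi]; exact i.2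
      exact this (by rw [← hj]; exact hnbS j)
    have hs1 : ∑ p ∈ P₁, t p.1 p.2 = ∑ i : {v : V // v ∉ S}, (v i)^2 := by
      rw [hP₁, Finset.sum_image (by intro a _ b _ h; exact Subtype.coe_injective (congrArg Prod.fst h))]
      refine Finset.sum_congr rfl fun i _ => ?_
      simp only [ht]
      rw [if_pos (hnbAdj i), hyF i, hyS _ (hnbS i), sub_zero]
    have hs2 : ∑ p ∈ P₂, t p.1 p.2 = ∑ i : {v : V // v ∉ S}, (v i)^2 := by
      rw [hP₂, Finset.sum_image (by intro a _ b _ h; exact Subtype.coe_injective (congrArg Prod.snd h))]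
      refine Finset.sum_congr rfl fun i _ => ?_
      simp only [ht]
      rw [if_pos (hnbAdj i).symm, hyF i, hyS _ (hnbS i), zero_sub, neg_sq]
    calc ∑ p ∈ Finset.univ ×ˢ Finset.univ, t p.1 p.2
        ≥ ∑ p ∈ P₁ ∪ P₂, t p.1 p.2 := by
          refine Finset.sum_le_sum_of_subset_of_nonneg (Finset.subset_univ _ |>.trans ?_) ?_
          · intro p hp; exact hp
          · intro p _ _; exact htnn p.1 p.2
      _ = 2 * ∑ i : {v : V // v ∉ S}, (v i)^2 := by
          rw [Finset.sum_union hdisj, hs1, hs2]; ring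
  have hvv : v ⬝ᵥ v = ∑ i : {v : V // v ∉ S}, (v i)^2 := by
    rw [dotProduct]
    exact Finset.sum_congr rfl fun i _ => (sq (v i)).symm ▸ (pow_two (v i)).symm
  have hvvnn : 0 ≤ v ⬝ᵥ v := Finset.sum_nonneg fun i _ => mul_self_nonneg (v i)
  have hvvpos : 0 < v ⬝ᵥ v := by
    rcases hvvnn.lt_or_eq with h | h
    · exact h
    · exact absurd (dotProduct_self_eq_zero.mp h.symm) hv0
  have hfinal : v ⬝ᵥ v ≤ μ * (v ⬝ᵥ v) := by
    calc v ⬝ᵥ v = ∑ i : {v : V // v ∉ S}, (v i)^2 := hvv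
      _ ≤ (∑ w : V, ∑ u : V, t w u) / 2 := by linarith [hP]
      _ = y ⬝ᵥ (G.lapMatrix ℝ *ᵥ y) := hquad.symm
      _ = v ⬝ᵥ (M *ᵥ v) := h1
      _ = μ * (v ⬝ᵥ v) := by rw [heig, dotProduct_smul, smul_eq_mul]
  nlinarith [hfinal, hvvpos]


/-- in `P(n,k)` there is a set `S` of `⌈n/(2k+1)⌉` reference vehicles such that
every follower is adjacent to a reference vehicle; consequently every eigenvalue of the
grounded Laplacian is at least `1` (i.e. `λ₁(L_g) ≥ 1`, equivalently the `H∞` norm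
`1/λ₁(L_g)` of the velocity tracking dynamics is at most `1`). -/
theorem platoon_minimally_dense_arrangement (n k : ℕ) (hn : 2 ≤ n) (hk : 1 ≤ k) :
    ∃ S : Finset (Fin n), S.card = ⌈(n : ℚ) / (2 * k + 1)⌉₊ ∧
      (∀ i : Fin n, i ∉ S → ∃ j ∈ S, (platoon n k).Adj i j) ∧
      (∀ μ ∈ spectrum ℝ (groundedLaplacian (platoon n k) S), 1 ≤ μ) := by
  classical
  set m := ⌈(n : ℚ) / (2 * k + 1)⌉₊ with hmdef
  have hd : (0:ℚ) < 2 * (k:ℚ) + 1 := by positivity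
  have hq : (n:ℚ) / (2 * k + 1) ≤ m := Nat.le_ceil _
  have hm1 : n ≤ m * (2*k+1) := by
    rw [div_le_iff₀ hd] at hq
    exact_mod_cast hq
  have hmpos : 0 < m := Nat.ceil_pos.mpr (div_pos (by exact_mod_cast (by omega : 0 < n)) hd)
  have hm2 : (2*k+1) * (m-1) < n := by
    by_contra h
    push_neg at h
    have hle : m ≤ m - 1 := by
      refine Nat.ceil_le.mpr ?_
      rw [div_le_iff₀ hd]
      calc (n:ℚ) ≤ (((2*k+1)*(m-1) : ℕ) : ℚ) := by exact_mod_cast h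
        _ = ((m-1 : ℕ):ℚ) * (2*(k:ℚ)+1) := by push_cast; ring
    omega
  -- the centers
  have hcval : ∀ t : ℕ, min (k + (2*k+1)*t) (n-1) < n :=
    fun t => lt_of_le_of_lt (min_le_right _ _) (by omega)
  set c : ℕ → Fin n := fun t => ⟨min (k + (2*k+1)*t) (n-1), hcval t⟩ with hc
  have hkey : ∀ t, t + 1 < m → k + (2*k+1)*t + 2 ≤ n := by
    intro t ht
    have h1 : (2*k+1)*(t+1) ≤ (2*k+1)*(m-1) := Nat.mul_le_mul_left _ (by omega)
    have h2 : (2*k+1)*(t+1) = (2*k+1)*t + (2*k+1) := by ring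
    omega
  have hmono : ∀ t s, t < s → s < m → (c t).val < (c s).val := by
    intro t s hts hsm
    have hk1 : k + (2*k+1)*t + 2 ≤ n := hkey t (by omega)
    have hle : (2*k+1)*t + 1 ≤ (2*k+1)*s := by
      have h1 : (2*k+1)*(t+1) ≤ (2*k+1)*s := Nat.mul_le_mul_left _ (by omega)
      have h2 : (2*k+1)*(t+1) = (2*k+1)*t + (2*k+1) := by ring
      omega
    exact minlt_aux (by omega) (by omega)
  set S : Finset (Fin n) := (Finset.range m).image c with hS
  have hinj : Set.InjOn c (Finset.range m) := by
    intro t ht s hs h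
    simp only [Finset.coe_range, Set.mem_Iio] at ht hs
    rcases lt_trichotomy t s with h' | h' | h'
    · exact absurd (congrArg Fin.val h) (hmono t s h' hs).ne
    · exact h'
    · exact absurd (congrArg Fin.val h.symm) (hmono s t h' ht).ne
  have hcard : S.card = m := by
    rw [hS, Finset.card_image_of_injOn hinj, Finset.card_range]
  have hcov : ∀ i : Fin n, i ∉ S → ∃ j ∈ S, (platoon n k).Adj i j := by
    intro i hiS
    set t := i.val / (2*k+1) with htdef
    have htm : t < m := by
      rw [htdef, Nat.div_lt_iff_lt_mul (by omega : 0 < 2*k+1)]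
      exact lt_of_lt_of_le i.isLt hm1
    have hdm : (2*k+1)*t + i.val % (2*k+1) = i.val := by
      rw [htdef]; exact Nat.div_add_mod i.val (2*k+1)
    have hmod : i.val % (2*k+1) < 2*k+1 := Nat.mod_lt _ (by omega)
    have hmem : c t ∈ S := by
      rw [hS]
      exact Finset.mem_image_of_mem c (Finset.mem_range.mpr htm)
    refine ⟨c t, hmem, (⟨?_, ?_⟩ : _ ∧ _)⟩
    · intro h; exact hiS (h ▸ hmem)
    · show ((i:ℤ) - ((c t : Fin n):ℤ)).natAbs ≤ k
      have : ((c t : Fin n):ℤ) = ((min (k + (2*k+1)*t) (n-1) : ℕ) : ℤ) := rfl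
      rw [this]
      exact cov_aux (by omega) (by omega) i.isLt
  exact ⟨S, hcard, hcov, grounded_spec _ S hcov⟩
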